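/- Let a be a finite tuple in a saturated model U of DCF_{0,m} over a Π-field K, let L ≥ K be a Π-field extension with a independent from L over K (in the sense of forking in DCF_{0,m}), and let Δ be a set of linearly independent elements of the K^Π-span of Π. Then the Π-field L⟨a⟩_Π is finitely Δ-generated over L if and only if K⟨a⟩_Π is finitely Δ-generated over K. -/

import Mathlib

/-- Multi-indices of derivative operators (the monoid Θ). -/
abbrev Theta (ι : Type*) := ι →₀ ℕ

/-- Apply a multi-index `θ` of operators from the family `δ` to `a`. -/
noncomputable def thetaApply {A ι : Type*} (δ : ι → A → A) (θ : Theta ι) (a : A) : A :=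
  ((θ.support.toList.map fun j => (δ j)^[θ j]).foldr (· ∘ ·) id) a

/-- A family of commuting derivations on a commutative ring. -/
def IsCommDiff {A : Type*} [CommRing A] {ι : Type*} (δA : ι → A → A) : Prop :=
  (∀ j x y, δA j (x + y) = δA j x + δA j y)
  ∧ (∀ j x y, δA j (x * y) = x * δA j y + δA j x * y)
  ∧ (∀ i j x, δA i (δA j x) = δA j (δA i x))

/-- A subfield stable under a family of derivations (a differential subfield). -/
def DStable {U ι : Type*} [Field U] (δ : ι → U → U) (F : Subfield U) : Prop :=
  ∀ j, ∀ x ∈ F, δ j x ∈ F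

/-- The differential field `F⟨a⟩` generated by a tuple `a` over a subfield `F`,
w.r.t. the family of derivations `δ`: the subfield generated by `F` together with
all derivatives `θ a_k`. -/
noncomputable def dAdjoin {U ι : Type*} [Field U] (δ : ι → U → U)
    (F : Subfield U) {n : ℕ} (a : Fin n → U) : Subfield U :=
  Subfield.closure (↑F ∪ {x | ∃ (k : Fin n) (θ : Theta ι), x = thetaApply δ θ (a k)})

/-- `F⟨a⟩_Π` is finitely generated as a `Δ`-field extension of `F`
("Δ bounds the Π-type of `a` over `F`"). -/
def FinitelyDGen {U ι : Type*} [Field U] (dPi : ι → U → U) {t : ℕ}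
    (dDe : Fin t → U → U) (F : Subfield U) {n : ℕ} (a : Fin n → U) : Prop :=
  ∃ (s : ℕ) (α : Fin s → U), (∀ k, α k ∈ dAdjoin dPi F a)
    ∧ dAdjoin dPi F a = dAdjoin dDe F α

set_option linter.unusedSectionVars false
set_option maxHeartbeats 1000000
set_option synthInstance.maxHeartbeats 1000000

namespace DCFAux





variable {A ι : Type*} [DecidableEq ι]

/-- fold application of a list of derivation indices -/
def DL (δA : ι → A → A) : List ι → A → A
  | [], x => x
  | (j :: l), x => δA j (DL δA l x)

lemma DL_append (δA : ι → A → A) (l₁ l₂ : List ι) (x : A) :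
    DL δA (l₁ ++ l₂) x = DL δA l₁ (DL δA l₂ x) := by
  induction l₁ with
  | nil => rfl
  | cons a l ih => simp [DL, ih]

lemma iterate_eq_DL (δA : ι → A → A) (j : ι) (k : ℕ) (x : A) :
    (δA j)^[k] x = DL δA (List.replicate k j) x := by
  induction k with
  | zero => rfl
  | succ k ih =>
    rw [Function.iterate_succ', List.replicate_succ]
    simp [DL, ih, Function.comp]

/-- flat list of a multi-index -/
noncomputable def flat (θ : Theta ι) : List ι :=
  θ.support.toList.flatMap fun j => List.replicate (θ j) j

lemma foldr_map_eq_DL (δA : ι → A → A) (θ : Theta ι) (l : List ι) (x : A) :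
    ((l.map fun j => (δA j)^[θ j]).foldr (· ∘ ·) id) x
      = DL δA (l.flatMap fun j => List.replicate (θ j) j) x := by
  induction l generalizing x with
  | nil => rfl
  | cons a l ih =>
    simp only [List.map_cons, List.foldr_cons, List.flatMap_cons]
    rw [DL_append, ← ih x, Function.comp_apply, iterate_eq_DL]

lemma thetaApply_eq_DL (δA : ι → A → A) (θ : Theta ι) (x : A) :
    thetaApply δA θ x = DL δA (flat θ) x :=
  foldr_map_eq_DL δA θ _ x

lemma DL_perm (δA : ι → A → A) (hcomm : ∀ i j x, δA i (δA j x) = δA j (δA i x))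
    {l₁ l₂ : List ι} (h : l₁.Perm l₂) : ∀ x, DL δA l₁ x = DL δA l₂ x := by
  induction h with
  | nil => intro x; rfl
  | cons a h ih => intro x; simp [DL, ih x]
  | swap a b l => intro x; simp [DL, hcomm]
  | trans h₁ h₂ ih₁ ih₂ => intro x; rw [ih₁ x, ih₂ x]

lemma count_flatMap_replicate (θ : ι → ℕ) (j : ι) :
    ∀ (l : List ι), l.Nodup →
      ((l.flatMap fun j' => List.replicate (θ j') j').count j = if j ∈ l then θ j else 0) := by
  intro l
  induction l with
  | nil => intro _; simp
  | cons a l ih =>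
    intro hnd
    rw [List.flatMap_cons, List.count_append, List.count_replicate, ih hnd.of_cons]
    by_cases hja : a = j
    · subst hja
      have : a ∉ l := (List.nodup_cons.mp hnd).1
      simp [this]
    · simp only [beq_iff_eq, hja, if_false]
      by_cases hjl : j ∈ l
      · simp [hjl, Ne.symm hja]
      · simp [hjl, Ne.symm hja]

lemma count_flat (θ : Theta ι) (j : ι) : (flat θ).count j = θ j := by
  rw [flat, count_flatMap_replicate θ j _ (Finset.nodup_toList _)]
  by_cases h : j ∈ θ.support
  · simp [Finset.mem_toList.mpr h]
  · have h0 : θ j = 0 := by simpa [Finsupp.mem_support_iff] using h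
    simp [h0]

lemma flat_add_single_perm (θ : Theta ι) (i : ι) :
    (flat (θ + Finsupp.single i 1)).Perm (i :: flat θ) := by
  rw [List.perm_iff_count]
  intro j
  rw [count_flat, List.count_cons, count_flat, Finsupp.add_apply, Finsupp.single_apply]
  by_cases h : i = j <;> simp [h]

/-- Key lemma: applying `θ + e_i` equals applying `δ i` after `θ`. -/
lemma thetaApply_add_single (δA : ι → A → A)
    (hcomm : ∀ i j x, δA i (δA j x) = δA j (δA i x)) (θ : Theta ι) (i : ι) (x : A) :
    thetaApply δA (θ + Finsupp.single i 1) x = δA i (thetaApply δA θ x) := by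
  rw [thetaApply_eq_DL, thetaApply_eq_DL,
    DL_perm δA hcomm (flat_add_single_perm θ i) x]
  rfl

lemma thetaApply_zero (δA : ι → A → A) (x : A) : thetaApply δA 0 x = x := by
  simp [thetaApply]

/-- the order (total degree) of a multi-index -/
def deg (θ : Theta ι) : ℕ := θ.sum fun _ k => k

lemma deg_add (θ₁ θ₂ : Theta ι) : deg (θ₁ + θ₂) = deg θ₁ + deg θ₂ := by
  unfold deg
  exact Finsupp.sum_add_index' (fun _ => rfl) (fun _ _ _ => rfl)

lemma deg_single (i : ι) (k : ℕ) : deg (Finsupp.single i k) = k := by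
  unfold deg
  exact Finsupp.sum_single_index rfl

lemma deg_zero : deg (0 : Theta ι) = 0 := by simp [deg]

lemma exists_decomp {θ : Theta ι} (h : θ ≠ 0) :
    ∃ (i : ι) (θ' : Theta ι), θ = θ' + Finsupp.single i 1 ∧ deg θ = deg θ' + 1 := by
  obtain ⟨i, hi⟩ := Finsupp.support_nonempty_iff.mpr h
  have hθi : 1 ≤ θ i := Nat.one_le_iff_ne_zero.mpr (Finsupp.mem_support_iff.mp hi)
  refine ⟨i, θ - Finsupp.single i 1, ?_, ?_⟩
  · ext j
    rw [Finsupp.add_apply, Finsupp.tsub_apply, Finsupp.single_apply]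
    by_cases hji : i = j
    · subst hji; rw [if_pos rfl]; omega
    · simp [hji]
  · have : (θ - Finsupp.single i 1) + Finsupp.single i 1 = θ := by
      ext j
      rw [Finsupp.add_apply, Finsupp.tsub_apply, Finsupp.single_apply]
      by_cases hji : i = j
      · subst hji; rw [if_pos rfl]; omega
      · simp [hji]
    conv_lhs => rw [← this]
    rw [deg_add, deg_single]

lemma deg_le_apply (θ : Theta ι) (j : ι) : θ j ≤ deg θ := by
  by_cases h : j ∈ θ.support
  · unfold deg Finsupp.sum
    exact Finset.single_le_sum (f := fun a => θ a) (fun _ _ => Nat.zero_le _) h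
  · have : θ j = 0 := by simpa [Finsupp.mem_support_iff] using h
    omega


variable {U : Type} [Field U]

section Der
variable (D : U → U) (hDa : ∀ x y, D (x + y) = D x + D y)
  (hDm : ∀ x y, D (x * y) = x * D y + D x * y)

include hDa in
lemma der_zero : D 0 = 0 := by
  have h : D 0 + 0 = D 0 + D 0 := by
    rw [add_zero]; simpa using hDa 0 0
  exact (add_left_cancel h).symm

include hDa in
lemma der_neg (x : U) : D (-x) = - D x := by
  have h : D x + D (-x) = 0 := by
    rw [← hDa, add_neg_cancel, der_zero D hDa]
  exact eq_neg_of_add_eq_zero_right h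

include hDa hDm in
lemma der_one : D 1 = 0 := by
  have h : D 1 + 0 = D 1 + D 1 := by
    rw [add_zero]; simpa using hDm 1 1
  exact (add_left_cancel h).symm

include hDa hDm in
lemma der_inv (x : U) (hx : x ≠ 0) : D x⁻¹ = -(D x) * x⁻¹ * x⁻¹ := by
  have h0 : x * D x⁻¹ + D x * x⁻¹ = 0 := by
    rw [← hDm, mul_inv_cancel₀ hx, der_one D hDa hDm]
  have h1 : x * D x⁻¹ = -(D x * x⁻¹) := eq_neg_of_add_eq_zero_left h0
  have h2 : D x⁻¹ = x⁻¹ * (x * D x⁻¹) := by field_simp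
  rw [h2, h1]; ring

include hDa in
lemma der_sum {ι : Type*} (s : Finset ι) (f : ι → U) :
    D (∑ i ∈ s, f i) = ∑ i ∈ s, D (f i) := by
  classical
  induction s using Finset.induction_on with
  | empty => simpa using der_zero D hDa
  | insert _ _ hni ih =>
    rw [Finset.sum_insert hni, Finset.sum_insert hni, hDa, ih]

include hDa hDm in
lemma der_pow_succ (x : U) (k : ℕ) :
    D (x ^ (k + 1)) = ((k : U) + 1) * x ^ k * D x := by
  induction k with
  | zero => simp [pow_one]
  | succ k ih =>
    rw [pow_succ, hDm, ih]
    push_cast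
    ring
end Der

/-- A subfield closure is stable under a derivation as soon as the generators are. -/
lemma closure_stable (D : U → U) (hDa : ∀ x y, D (x + y) = D x + D y)
    (hDm : ∀ x y, D (x * y) = x * D y + D x * y)
    (X : Set U) (hgen : ∀ x ∈ X, D x ∈ Subfield.closure X) :
    ∀ x ∈ Subfield.closure X, D x ∈ Subfield.closure X := by
  intro x hx
  induction hx using Subfield.closure_induction with
  | mem x hx => exact hgen x hx
  | one => rw [der_one D hDa hDm]; exact Subfield.zero_mem _
  | add x y hx hy ihx ihy => rw [hDa]; exact Subfield.add_mem _ ihx ihy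
  | neg x hx ihx => rw [der_neg D hDa]; exact Subfield.neg_mem _ ihx
  | inv x hx ihx =>
    by_cases h0 : x = 0
    · subst h0
      rw [inv_zero, der_zero D hDa]; exact Subfield.zero_mem _
    · rw [der_inv D hDa hDm x h0]
      exact Subfield.mul_mem _ (Subfield.mul_mem _ (Subfield.neg_mem _ ihx)
        (Subfield.inv_mem _ hx)) (Subfield.inv_mem _ hx)
  | mul x y hx hy ihx ihy =>
    rw [hDm]
    exact Subfield.add_mem _ (Subfield.mul_mem _ hx ihy) (Subfield.mul_mem _ ihx hy)


variable {U : Type} [Field U]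

/-- `x` is algebraic over the subfield `F` (via a polynomial with coefficients in `F`). -/
def AlgOver (F : Subfield U) (x : U) : Prop :=
  ∃ p : Polynomial U, p ≠ 0 ∧ (∀ k, p.coeff k ∈ F) ∧ Polynomial.eval x p = 0

lemma AlgOver.mono {F G : Subfield U} (h : F ≤ G) {x : U} (hx : AlgOver F x) :
    AlgOver G x := by
  obtain ⟨p, hp0, hpc, hpe⟩ := hx
  exact ⟨p, hp0, fun k => h (hpc k), hpe⟩

lemma algOver_of_mem {F : Subfield U} {x : U} (hx : x ∈ F) : AlgOver F x := by
  refine ⟨Polynomial.X - Polynomial.C x, Polynomial.X_sub_C_ne_zero x, fun k => ?_, by simp⟩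
  have hc : (Polynomial.X - Polynomial.C x).coeff k
      = (if 1 = k then 1 else 0) - (if k = 0 then x else 0) := by
    rw [Polynomial.coeff_sub, Polynomial.coeff_X, Polynomial.coeff_C]
  rw [hc]
  split_ifs with h1 h2 h2
  · omega
  · simpa using F.one_mem
  · simpa using F.neg_mem hx
  · simpa using F.zero_mem

/-- restriction of a polynomial with coefficients in a subfield -/
lemma exists_poly_restrict (F : Subfield U) (p : Polynomial U) (h : ∀ k, p.coeff k ∈ F) :
    ∃ p' : Polynomial ↥F, Polynomial.map (algebraMap ↥F U) p' = p := by
  refine ⟨∑ k ∈ p.support, Polynomial.monomial k (⟨p.coeff k, h k⟩ : ↥F), ?_⟩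
  rw [Polynomial.map_sum]
  simp only [Polynomial.map_monomial]
  have : ∀ k, (algebraMap ↥F U) (⟨p.coeff k, h k⟩ : ↥F) = p.coeff k := fun _ => rfl
  simp only [this]
  exact p.sum_monomial_eq  -- might need adjusting
 
lemma algOver_iff_isAlgebraic (F : Subfield U) (x : U) :
    AlgOver F x ↔ IsAlgebraic ↥F x := by
  constructor
  · rintro ⟨p, hp0, hpc, hpe⟩
    obtain ⟨p', hp'⟩ := exists_poly_restrict F p hpc
    refine ⟨p', fun h0 => hp0 (by rw [← hp', h0, Polynomial.map_zero]), ?_⟩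
    rw [Polynomial.aeval_def, ← Polynomial.eval_map, hp', hpe]
  · rintro ⟨p', hp'0, hp'e⟩
    refine ⟨p'.map (algebraMap ↥F U), fun h0 => hp'0 ?_, fun k => ?_, ?_⟩
    · exact Polynomial.map_injective _ (RingHom.injective _) (h0.trans (Polynomial.map_zero _).symm)
    · rw [Polynomial.coeff_map]
      exact SetLike.coe_mem _
    · rw [Polynomial.eval_map, ← Polynomial.aeval_def, hp'e]

/-- Transitivity: if `y` is algebraic over `F` and `x` is algebraic over `F(y)`,
then `x` is algebraic over `F`. -/
lemma algOver_trans (F : Subfield U) (y x : U) (hy : AlgOver F y)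
    (hx : AlgOver (Subfield.closure ((F : Set U) ∪ {y})) x) : AlgOver F x := by
  have hyA : IsAlgebraic ↥F y := (algOver_iff_isAlgebraic F y).mp hy
  have hyI : IsIntegral ↥F y := hyA.isIntegral
  set E : IntermediateField ↥F U := IntermediateField.adjoin ↥F {y} with hE
  haveI : FiniteDimensional ↥F ↥E := IntermediateField.adjoin.finiteDimensional hyI
  set G : Subfield U := E.toSubfield with hG
  have hFG : F ≤ G := by
    intro u hu
    have : (algebraMap ↥F U) (⟨u, hu⟩ : ↥F) ∈ E := E.algebraMap_mem _
    exact this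
  have hyG : y ∈ G := IntermediateField.mem_adjoin_simple_self ↥F y
  have hclos : Subfield.closure ((F : Set U) ∪ {y}) ≤ G := by
    rw [Subfield.closure_le]
    rintro u (hu | hu)
    · exact hFG hu
    · rcases hu with rfl; exact hyG
  have hxG : IsAlgebraic ↥G x := (algOver_iff_isAlgebraic G x).mp (hx.mono hclos)
  -- set up the tower F ≤ G ≤ U
  letI : Algebra ↥F ↥G := (Subfield.inclusion hFG).toAlgebra
  haveI : IsScalarTower ↥F ↥G U := IsScalarTower.of_algebraMap_eq (fun _ => rfl)
  haveI : Algebra.IsIntegral ↥F ↥G := by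
    constructor
    intro g
    have hgE : (g : U) ∈ E := (IntermediateField.mem_toSubfield E (g : U)).mp g.2
    have h1 : IsIntegral ↥F (⟨(g : U), hgE⟩ : ↥E) :=
      ((IntermediateField.isAlgebraic_adjoin_simple hyI).isAlgebraic _).isIntegral
    have h2 : IsIntegral ↥F ((g : ↥G) : U) := by
      exact IntermediateField.isIntegral_iff.mp h1
    have hinj : Function.Injective (algebraMap ↥G U) := fun a b hab => Subtype.ext hab
    exact (isIntegral_algebraMap_iff hinj).mp h2
  have : IsIntegral ↥F x := isIntegral_trans x hxG.isIntegral
  exact (algOver_iff_isAlgebraic F x).mpr this.isAlgebraic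


variable {U : Type} [Field U]

lemma range_fin_append {d1 d2 : ℕ} (v1 : Fin d1 → U) (v2 : Fin d2 → U) (i : Fin (d1 + d2)) :
    Fin.append v1 v2 i ∈ Set.range v1 ∪ Set.range v2 := by
  induction i using Fin.addCases with
  | left j => rw [Fin.append_left]; exact Or.inl ⟨j, rfl⟩
  | right j => rw [Fin.append_right]; exact Or.inr ⟨j, rfl⟩

/-- every element of a closure of `B ∪ S` lies in the closure of `B` with finitely
many elements of `S` -/
lemma mem_closure_finite {B S : Set U} {x : U} (hx : x ∈ Subfield.closure (B ∪ S)) :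
    ∃ (d : ℕ) (v : Fin d → U), (∀ i, v i ∈ S) ∧ x ∈ Subfield.closure (B ∪ Set.range v) := by
  induction hx using Subfield.closure_induction with
  | mem x hx =>
    rcases hx with hx | hx
    · exact ⟨0, Fin.elim0, fun i => i.elim0,
        Subfield.subset_closure (Set.mem_union_left _ hx)⟩
    · exact ⟨1, fun _ => x, fun _ => hx,
        Subfield.subset_closure (Set.mem_union_right _ ⟨0, rfl⟩)⟩
  | one => exact ⟨0, Fin.elim0, fun i => i.elim0, Subfield.one_mem _⟩
  | add x y hx hy ihx ihy =>
    obtain ⟨d₁, v₁, hv₁, hx₁⟩ := ihx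
    obtain ⟨d₂, v₂, hv₂, hx₂⟩ := ihy
    refine ⟨d₁ + d₂, Fin.append v₁ v₂, ?_, ?_⟩
    · intro i
      rcases range_fin_append v₁ v₂ i with ⟨j, hj⟩ | ⟨j, hj⟩
      · rw [← hj]; exact hv₁ j
      · rw [← hj]; exact hv₂ j
    · have h1 : Subfield.closure (B ∪ Set.range v₁) ≤
          Subfield.closure (B ∪ Set.range (Fin.append v₁ v₂)) := by
        apply Subfield.closure_mono
        apply Set.union_subset_union_right
        rintro u ⟨j, rfl⟩
        exact ⟨Fin.castAdd d₂ j, by rw [Fin.append_left]⟩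
      have h2 : Subfield.closure (B ∪ Set.range v₂) ≤
          Subfield.closure (B ∪ Set.range (Fin.append v₁ v₂)) := by
        apply Subfield.closure_mono
        apply Set.union_subset_union_right
        rintro u ⟨j, rfl⟩
        exact ⟨Fin.natAdd d₁ j, by rw [Fin.append_right]⟩
      exact Subfield.add_mem _ (h1 hx₁) (h2 hx₂)
  | neg x hx ihx =>
    obtain ⟨d, v, hv, hx₁⟩ := ihx
    exact ⟨d, v, hv, Subfield.neg_mem _ hx₁⟩
  | inv x hx ihx =>
    obtain ⟨d, v, hv, hx₁⟩ := ihx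
    exact ⟨d, v, hv, Subfield.inv_mem _ hx₁⟩
  | mul x y hx hy ihx ihy =>
    obtain ⟨d₁, v₁, hv₁, hx₁⟩ := ihx
    obtain ⟨d₂, v₂, hv₂, hx₂⟩ := ihy
    refine ⟨d₁ + d₂, Fin.append v₁ v₂, ?_, ?_⟩
    · intro i
      rcases range_fin_append v₁ v₂ i with ⟨j, hj⟩ | ⟨j, hj⟩
      · rw [← hj]; exact hv₁ j
      · rw [← hj]; exact hv₂ j
    · have h1 : Subfield.closure (B ∪ Set.range v₁) ≤
          Subfield.closure (B ∪ Set.range (Fin.append v₁ v₂)) := by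
        apply Subfield.closure_mono
        apply Set.union_subset_union_right
        rintro u ⟨j, rfl⟩
        exact ⟨Fin.castAdd d₂ j, by rw [Fin.append_left]⟩
      have h2 : Subfield.closure (B ∪ Set.range v₂) ≤
          Subfield.closure (B ∪ Set.range (Fin.append v₁ v₂)) := by
        apply Subfield.closure_mono
        apply Set.union_subset_union_right
        rintro u ⟨j, rfl⟩
        exact ⟨Fin.natAdd d₁ j, by rw [Fin.append_right]⟩
      exact Subfield.mul_mem _ (h1 hx₁) (h2 hx₂)

/-- elements of `closure (F ∪ range v)` are rational in `v` over `F` -/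
lemma mem_closure_rational (F : Subfield U) {d : ℕ} (v : Fin d → U) {x : U}
    (hx : x ∈ Subfield.closure ((F : Set U) ∪ Set.range v)) :
    ∃ (num den : MvPolynomial (Fin d) ↥F),
      MvPolynomial.aeval v den ≠ 0 ∧ x * MvPolynomial.aeval v den = MvPolynomial.aeval v num := by
  induction hx using Subfield.closure_induction with
  | mem x hx =>
    rcases hx with hx | hx
    · exact ⟨MvPolynomial.C ⟨x, hx⟩, 1, by simp, by simp; rfl⟩
    · obtain ⟨j, rfl⟩ := hx
      exact ⟨MvPolynomial.X j, 1, by simp, by simp⟩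
  | one => exact ⟨1, 1, by simp, by simp⟩
  | add x y hx hy ihx ihy =>
    obtain ⟨n₁, d₁, hd₁, he₁⟩ := ihx
    obtain ⟨n₂, d₂, hd₂, he₂⟩ := ihy
    refine ⟨n₁ * d₂ + n₂ * d₁, d₁ * d₂, by simp [hd₁, hd₂], ?_⟩
    simp only [map_add, map_mul]
    linear_combination (MvPolynomial.aeval v d₂) * he₁ + (MvPolynomial.aeval v d₁) * he₂
  | neg x hx ihx =>
    obtain ⟨n₁, d₁, hd₁, he₁⟩ := ihx
    refine ⟨-n₁, d₁, hd₁, ?_⟩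
    rw [show -x * MvPolynomial.aeval v d₁ = -(x * MvPolynomial.aeval v d₁) by ring, he₁]
    simp
  | inv x hx ihx =>
    obtain ⟨n₁, d₁, hd₁, he₁⟩ := ihx
    by_cases hn : MvPolynomial.aeval v n₁ = 0
    · have hx0 : x = 0 := by
        have := he₁
        rw [hn] at this
        rcases mul_eq_zero.mp this with h | h
        · exact h
        · exact absurd h hd₁
      exact ⟨0, 1, by simp, by simp [hx0]⟩
    · have hx0 : x ≠ 0 := by
        intro h
        rw [h, zero_mul] at he₁
        exact hn he₁.symm
      refine ⟨d₁, n₁, hn, ?_⟩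
      rw [← he₁]
      field_simp
  | mul x y hx hy ihx ihy =>
    obtain ⟨n₁, d₁, hd₁, he₁⟩ := ihx
    obtain ⟨n₂, d₂, hd₂, he₂⟩ := ihy
    refine ⟨n₁ * n₂, d₁ * d₂, by simp [hd₁, hd₂], ?_⟩
    simp only [map_mul]
    rw [show x * y * (MvPolynomial.aeval v d₁ * MvPolynomial.aeval v d₂)
        = (x * MvPolynomial.aeval v d₁) * (y * MvPolynomial.aeval v d₂) by ring, he₁, he₂]

/-- evaluation of an `MvPolynomial` with coefficients in `F` at points of a set
lands in the closure -/
lemma eval_mem_closure (F : Subfield U) {d : ℕ} (v : Fin d → U)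
    (g : MvPolynomial (Fin d) U) (hg : ∀ mon, g.coeff mon ∈ F) :
    MvPolynomial.eval v g ∈ Subfield.closure ((F : Set U) ∪ Set.range v) := by
  rw [MvPolynomial.eval_eq]
  apply Subfield.sum_mem
  intro mon _
  apply Subfield.mul_mem
  · exact Subfield.subset_closure (Set.mem_union_left _ (hg mon))
  · apply Subfield.prod_mem
    intro i _
    exact Subfield.pow_mem _ (Subfield.subset_closure (Set.mem_union_right _ (Set.mem_range_self i))) _

lemma aeval_eq_eval_map {R : Type*} [CommRing R] [Algebra R U] {σ : Type*} (v : σ → U)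
    (g : MvPolynomial σ R) :
    MvPolynomial.aeval v g = MvPolynomial.eval v (MvPolynomial.map (algebraMap R U) g) := by
  rw [MvPolynomial.eval_map, MvPolynomial.aeval_def]

/-- `finSuccEquiv` sends `rename Fin.succ g` to the constant polynomial `C g`. -/
lemma finSuccEquiv_rename_succ {R : Type*} [CommRing R] {d : ℕ}
    (g : MvPolynomial (Fin d) R) :
    MvPolynomial.finSuccEquiv R d (MvPolynomial.rename Fin.succ g) = Polynomial.C g := by
  induction g using MvPolynomial.induction_on with
  | C a =>
    rw [MvPolynomial.rename_C, MvPolynomial.finSuccEquiv_apply, MvPolynomial.eval₂Hom_C]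
    rfl
  | add p q ihp ihq => rw [map_add, map_add, ihp, ihq, map_add]
  | mul_X p j ih =>
    rw [map_mul, MvPolynomial.rename_X, map_mul, ih, MvPolynomial.finSuccEquiv_X_succ,
      ← map_mul]


variable {U : Type} [Field U]


/-- If a nonzero polynomial relation with coefficients in `K` holds among `v`,
then some `v j` is algebraic over `K` with the other coordinates. -/
lemma exists_algOver_of_relation (K : Subfield U) :
    ∀ (d : ℕ) (v : Fin d → U) (w : MvPolynomial (Fin d) U),
      (∀ mon, w.coeff mon ∈ K) → w ≠ 0 → MvPolynomial.eval v w = 0 →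
      ∃ j : Fin d, AlgOver (Subfield.closure ((K : Set U) ∪ (v '' {i | i ≠ j}))) (v j) := by
  intro d
  induction d with
  | zero =>
    intro v w _ hw0 hwe
    exfalso
    apply hw0
    rw [MvPolynomial.eq_C_of_isEmpty w] at hwe ⊢
    rw [MvPolynomial.eval_C] at hwe
    rw [hwe, map_zero]
  | succ d ih =>
    intro v w hwK hw0 hwe
    set P' := MvPolynomial.finSuccEquiv U d w with hP'
    have hP'0 : P' ≠ 0 := by
      rw [hP', Ne, EmbeddingLike.map_eq_zero_iff]
      exact hw0
    set q : Polynomial U := P'.map (MvPolynomial.eval (Fin.tail v)) with hq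
    have hqe : Polynomial.eval (v 0) q = 0 := by
      rw [hq, hP']
      rw [← MvPolynomial.eval_eq_eval_mv_eval' (Fin.tail v) (v 0) w,
        Fin.cons_self_tail, hwe]
    by_cases hq0 : q = 0
    · -- all coefficients vanish; recurse with a nonzero coefficient of P'
      have hex : ∃ k, P'.coeff k ≠ 0 := by
        by_contra hall
        push_neg at hall
        exact hP'0 (Polynomial.ext fun n => by simpa using hall n)
      obtain ⟨k, hk⟩ := hex
      have hke : MvPolynomial.eval (Fin.tail v) (P'.coeff k) = 0 := by
        have : q.coeff k = 0 := by rw [hq0]; simp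
        rwa [hq, Polynomial.coeff_map] at this
      have hkK : ∀ mon, (P'.coeff k).coeff mon ∈ K := by
        intro mon
        rw [hP', MvPolynomial.finSuccEquiv_coeff_coeff]
        exact hwK _
      obtain ⟨j', hj'⟩ := ih (Fin.tail v) (P'.coeff k) hkK hk hke
      refine ⟨j'.succ, ?_⟩
      have hsub : Subfield.closure ((K : Set U) ∪ (Fin.tail v '' {i | i ≠ j'}))
          ≤ Subfield.closure ((K : Set U) ∪ (v '' {i | i ≠ j'.succ})) := by
        apply Subfield.closure_mono
        apply Set.union_subset_union_right
        rintro u ⟨i, hi, rfl⟩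
        exact ⟨i.succ, fun h => hi (Fin.succ_injective d h), rfl⟩
      obtain ⟨p, hp0, hpc, hpe⟩ := hj'
      exact ⟨p, hp0, fun kk => hsub (hpc kk), hpe⟩
    · -- v 0 is algebraic over K with the tail
      refine ⟨0, q, hq0, fun kk => ?_, hqe⟩
      have hmem : q.coeff kk ∈ Subfield.closure ((K : Set U) ∪ Set.range (Fin.tail v)) := by
        rw [hq, Polynomial.coeff_map]
        apply eval_mem_closure
        intro mon
        rw [hP', MvPolynomial.finSuccEquiv_coeff_coeff]
        exact hwK _
      have hsub : Subfield.closure ((K : Set U) ∪ Set.range (Fin.tail v))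
          ≤ Subfield.closure ((K : Set U) ∪ (v '' {i | i ≠ 0})) := by
        apply Subfield.closure_mono
        apply Set.union_subset_union_right
        rintro u ⟨i, rfl⟩
        exact ⟨i.succ, Fin.succ_ne_zero i, rfl⟩
      exact hsub hmem


lemma aeval_cons_rename_succ {R : Type*} [CommRing R] [Algebra R U] {d : ℕ}
    (x : U) (v : Fin d → U) (g : MvPolynomial (Fin d) R) :
    MvPolynomial.aeval (Fin.cons x v) (MvPolynomial.rename Fin.succ g)
      = MvPolynomial.aeval v g := by
  rw [MvPolynomial.aeval_rename]
  have h : (Fin.cons x v : Fin (d+1) → U) ∘ Fin.succ = v := by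
    funext i
    simp
  rw [h]

/-- The key descent: if `x ∈ P` is algebraic over `L(v)` with `v` from `P`, then `x` is
algebraic over `K(v)`, given that algebraic independence over `K` of tuples from `P`
implies algebraic independence over `L`. -/
lemma algOver_descent (K L : Subfield U) (hKL : K ≤ L) (P : Set U)
    (hind' : ∀ (d : ℕ) (z : Fin d → U), (∀ k, z k ∈ P) →
      AlgebraicIndependent ↥K z → AlgebraicIndependent ↥L z) :
    ∀ (d : ℕ) (v : Fin d → U), (∀ i, v i ∈ P) → ∀ x, x ∈ P →
      AlgOver (Subfield.closure ((L : Set U) ∪ Set.range v)) x →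
      AlgOver (Subfield.closure ((K : Set U) ∪ Set.range v)) x := by
  intro d
  induction d using Nat.strong_induction_on with
  | _ d IH =>
  intro v hv x hx hxL
  by_cases hAI : AlgebraicIndependent ↥K (Fin.cons x v)
  · exfalso
    have hmem : ∀ k, (Fin.cons x v : Fin (d+1) → U) k ∈ P := by
      intro k
      refine Fin.cases ?_ ?_ k
      · simpa using hx
      · intro i; simpa using hv i
    have hAIL : AlgebraicIndependent ↥L (Fin.cons x v) := hind' (d+1) _ hmem hAI
    obtain ⟨p, hp0, hpc, hpe⟩ := hxL
    set n := p.natDegree with hn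
    choose num den hden hnumden using fun k : ℕ => mem_closure_rational L v (hpc k)
    set R : MvPolynomial (Fin (d+1)) ↥L :=
      ∑ k ∈ Finset.range (n+1),
        MvPolynomial.rename Fin.succ
            (num k * ∏ j ∈ (Finset.range (n+1)).erase k, den j) * (MvPolynomial.X 0) ^ k
      with hR
    have hRe : MvPolynomial.aeval (Fin.cons x v) R = 0 := by
      rw [hR, map_sum]
      have hterm : ∀ k ∈ Finset.range (n+1),
          MvPolynomial.aeval (Fin.cons x v)
            (MvPolynomial.rename Fin.succ
              (num k * ∏ j ∈ (Finset.range (n+1)).erase k, den j) * (MvPolynomial.X 0) ^ k)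
          = (MvPolynomial.aeval v (∏ j ∈ Finset.range (n+1), den j)) * (p.coeff k * x ^ k) := by
        intro k hk
        have h1 : MvPolynomial.aeval v (∏ j ∈ Finset.range (n+1), den j)
            = MvPolynomial.aeval v (den k)
              * ∏ j ∈ (Finset.range (n+1)).erase k, MvPolynomial.aeval v (den j) := by
          rw [map_prod, ← Finset.mul_prod_erase _ _ hk]
        rw [map_mul, map_pow, MvPolynomial.aeval_X, Fin.cons_zero, aeval_cons_rename_succ,
          map_mul, map_prod, h1, ← hnumden k]
        ring
      rw [Finset.sum_congr rfl hterm, ← Finset.mul_sum]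
      rw [show ∑ k ∈ Finset.range (n+1), p.coeff k * x ^ k = Polynomial.eval x p from
        (Polynomial.eval_eq_sum_range x).symm]
      rw [hpe, mul_zero]
    have hR0 : R = 0 := algebraicIndependent_iff.mp hAIL R hRe
    -- extract the coefficient at the top degree
    have hcoeff : (MvPolynomial.finSuccEquiv ↥L d R).coeff n
        = num n * ∏ j ∈ (Finset.range (n+1)).erase n, den j := by
      rw [hR, map_sum, Polynomial.finset_sum_coeff]
      have hterm : ∀ k ∈ Finset.range (n+1),
          ((MvPolynomial.finSuccEquiv ↥L d)
            (MvPolynomial.rename Fin.succ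
              (num k * ∏ j ∈ (Finset.range (n+1)).erase k, den j) * (MvPolynomial.X 0) ^ k)).coeff n
          = if n = k then num k * ∏ j ∈ (Finset.range (n+1)).erase k, den j else 0 := by
        intro k hk
        rw [map_mul, map_pow, MvPolynomial.finSuccEquiv_X_zero, finSuccEquiv_rename_succ,
          Polynomial.coeff_C_mul, Polynomial.coeff_X_pow]
        split_ifs <;> simp
      rw [Finset.sum_congr rfl hterm, Finset.sum_ite_eq (Finset.range (n+1))]
      simp
    rw [hR0] at hcoeff
    simp only [map_zero, Polynomial.coeff_zero] at hcoeff
    have hne : (p.coeff n * MvPolynomial.aeval v (den n))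
        * ∏ j ∈ (Finset.range (n+1)).erase n, MvPolynomial.aeval v (den j) ≠ 0 := by
      apply mul_ne_zero
      · exact mul_ne_zero (by rw [hn]; exact Polynomial.leadingCoeff_ne_zero.mpr hp0) (hden n)
      · exact Finset.prod_ne_zero_iff.mpr fun j _ => hden j
    have heval := congrArg (MvPolynomial.aeval v) hcoeff.symm
    rw [map_mul, map_zero, ← hnumden n, map_prod] at heval
    exact hne heval
  · -- there is a nonzero K-relation among (x, v)
    have hex : ∃ p : MvPolynomial (Fin (d+1)) ↥K,
        MvPolynomial.aeval (Fin.cons x v) p = 0 ∧ p ≠ 0 := by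
      by_contra hall
      push_neg at hall
      exact hAI (algebraicIndependent_iff.mpr fun p hp => hall p hp)
    obtain ⟨p, hpe, hp0⟩ := hex
    set p₀ : MvPolynomial (Fin (d+1)) U := MvPolynomial.map (algebraMap ↥K U) p with hp₀
    have hp₀0 : p₀ ≠ 0 := fun h =>
      hp0 (MvPolynomial.map_injective _ (RingHom.injective _) (h.trans (map_zero _).symm))
    have hp₀K : ∀ mon, p₀.coeff mon ∈ K := by
      intro mon
      rw [hp₀, MvPolynomial.coeff_map]
      exact SetLike.coe_mem _
    have hp₀e : MvPolynomial.eval (Fin.cons x v) p₀ = 0 := by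
      rw [hp₀, ← aeval_eq_eval_map, hpe]
    set q : Polynomial U :=
      (MvPolynomial.finSuccEquiv U d p₀).map (MvPolynomial.eval v) with hq
    have hqe : Polynomial.eval x q = 0 := by
      rw [hq, ← MvPolynomial.eval_eq_eval_mv_eval', hp₀e]
    by_cases hq0 : q = 0
    · -- v itself satisfies a relation; delete a coordinate and recurse
      have hP'0 : MvPolynomial.finSuccEquiv U d p₀ ≠ 0 := by
        rw [Ne, EmbeddingLike.map_eq_zero_iff]
        exact hp₀0
      have hexk : ∃ k, (MvPolynomial.finSuccEquiv U d p₀).coeff k ≠ 0 := by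
        by_contra hall
        push_neg at hall
        exact hP'0 (Polynomial.ext fun nn => by simpa using hall nn)
      obtain ⟨k, hk⟩ := hexk
      have hke : MvPolynomial.eval v ((MvPolynomial.finSuccEquiv U d p₀).coeff k) = 0 := by
        have : q.coeff k = 0 := by rw [hq0]; simp
        rwa [hq, Polynomial.coeff_map] at this
      have hkK : ∀ mon, ((MvPolynomial.finSuccEquiv U d p₀).coeff k).coeff mon ∈ K := by
        intro mon
        rw [MvPolynomial.finSuccEquiv_coeff_coeff]
        exact hp₀K _
      obtain ⟨j, hj⟩ := exists_algOver_of_relation K d v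
        ((MvPolynomial.finSuccEquiv U d p₀).coeff k) hkK hk hke
      -- now delete coordinate j
      rcases d with _ | d'
      · exact j.elim0
      set w' : Fin d' → U := v ∘ j.succAbove with hw'
      have hrange : Set.range w' = v '' {i | i ≠ j} := by
        ext u
        constructor
        · rintro ⟨i', rfl⟩
          exact ⟨j.succAbove i', Fin.succAbove_ne j i', rfl⟩
        · rintro ⟨i, hi, rfl⟩
          obtain ⟨z, hz⟩ := Fin.exists_succAbove_eq hi
          exact ⟨z, by rw [hw', Function.comp_apply, hz]⟩
      have hjw : AlgOver (Subfield.closure ((K : Set U) ∪ Set.range w')) (v j) := by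
        rw [hrange]; exact hj
      have hjwL : AlgOver (Subfield.closure ((L : Set U) ∪ Set.range w')) (v j) :=
        hjw.mono (Subfield.closure_mono (Set.union_subset_union_left _ hKL))
      -- rewrite L(v) as (L(w'))(v j)
      have hEQ : Subfield.closure ((L : Set U) ∪ Set.range v)
          = Subfield.closure ((Subfield.closure ((L : Set U) ∪ Set.range w') : Set U)
              ∪ {v j}) := by
        apply le_antisymm
        · rw [Subfield.closure_le]
          rintro u (hu | ⟨i, rfl⟩)
          · exact Subfield.subset_closure (Set.mem_union_left _
              (Subfield.subset_closure (Set.mem_union_left _ hu)))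
          · by_cases hij : i = j
            · subst hij
              exact Subfield.subset_closure (Set.mem_union_right _ rfl)
            · have : v i ∈ Set.range w' := by
                rw [hrange]; exact ⟨i, hij, rfl⟩
              exact Subfield.subset_closure (Set.mem_union_left _
                (Subfield.subset_closure (Set.mem_union_right _ this)))
        · rw [Subfield.closure_le]
          rintro u (hu | hu)
          · have : Subfield.closure ((L : Set U) ∪ Set.range w')
                ≤ Subfield.closure ((L : Set U) ∪ Set.range v) := by
              apply Subfield.closure_mono
              apply Set.union_subset_union_right
              rintro z ⟨i', rfl⟩
              exact ⟨j.succAbove i', rfl⟩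
            exact this hu
          · rcases hu with rfl
            exact Subfield.subset_closure (Set.mem_union_right _ ⟨j, rfl⟩)
      have hxw : AlgOver (Subfield.closure ((L : Set U) ∪ Set.range w')) x := by
        apply algOver_trans _ (v j) x hjwL
        rw [← hEQ]
        exact hxL
      have hxK : AlgOver (Subfield.closure ((K : Set U) ∪ Set.range w')) x :=
        IH d' (Nat.lt_succ_self d') w' (fun i' => hv _) x hx hxw
      refine hxK.mono (Subfield.closure_mono (Set.union_subset_union_right _ ?_))
      rintro z ⟨i', rfl⟩
      exact ⟨j.succAbove i', rfl⟩
    · -- x is algebraic over K(v) directly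
      refine ⟨q, hq0, fun k => ?_, hqe⟩
      rw [hq, Polynomial.coeff_map]
      apply eval_mem_closure
      intro mon
      rw [MvPolynomial.finSuccEquiv_coeff_coeff]
      exact hp₀K _

section Families

variable {U : Type} [Field U] {m t : ℕ}
  (δ : Fin m → U → U) (c : Fin t → Fin m → U) (dDe : Fin t → U → U)

lemma deg_eq_zero_iff {ι : Type*} [DecidableEq ι] {θ : Theta ι} : deg θ = 0 ↔ θ = 0 := by
  constructor
  · intro h
    ext j
    have := deg_le_apply θ j
    simp only [Finsupp.coe_zero, Pi.zero_apply]
    omega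
  · rintro rfl; exact deg_zero

section Rules
variable (hδ : IsCommDiff δ) (hc : ∀ j i, c j i ∈ (⊥ : Subfield U) ⊔ ⊤ → True)

omit hc

variable (hcconst : ∀ j i i', δ i' (c j i) = 0)
  (hΔdef : ∀ j x, dDe j x = ∑ i, c j i * δ i x)

include hδ hΔdef in
lemma dDe_add (j : Fin t) (x y : U) : dDe j (x + y) = dDe j x + dDe j y := by
  rw [hΔdef, hΔdef, hΔdef, ← Finset.sum_add_distrib]
  apply Finset.sum_congr rfl
  intro i _
  rw [hδ.1 i x y]
  ring

include hδ hΔdef in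
lemma dDe_mul (j : Fin t) (x y : U) : dDe j (x * y) = x * dDe j y + dDe j x * y := by
  rw [hΔdef, hΔdef, hΔdef, Finset.mul_sum, Finset.sum_mul, ← Finset.sum_add_distrib]
  apply Finset.sum_congr rfl
  intro i _
  rw [hδ.2.1 i x y]
  ring

include hδ hcconst hΔdef in
lemma delta_comm_dDe (i : Fin m) (j : Fin t) (x : U) :
    δ i (dDe j x) = dDe j (δ i x) := by
  rw [hΔdef, hΔdef, der_sum (δ i) (hδ.1 i)]
  apply Finset.sum_congr rfl
  intro k _
  rw [hδ.2.1 i (c j k) (δ k x), hcconst j k i, hδ.2.2 i k x]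
  ring

include hδ hcconst hΔdef in
lemma dDe_expand (j j' : Fin t) (x : U) :
    dDe j (dDe j' x) = ∑ i, ∑ k, c j i * (c j' k * δ i (δ k x)) := by
  rw [hΔdef j]
  apply Finset.sum_congr rfl
  intro i _
  rw [hΔdef j', der_sum (δ i) (hδ.1 i), Finset.mul_sum]
  apply Finset.sum_congr rfl
  intro k _
  rw [hδ.2.1 i (c j' k) (δ k x), hcconst j' k i]
  ring

include hδ hcconst hΔdef in
lemma dDe_comm (j j' : Fin t) (x : U) : dDe j (dDe j' x) = dDe j' (dDe j x) := by
  rw [dDe_expand δ c dDe hδ hcconst hΔdef, dDe_expand δ c dDe hδ hcconst hΔdef,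
    Finset.sum_comm]
  apply Finset.sum_congr rfl
  intro i _
  apply Finset.sum_congr rfl
  intro k _
  rw [hδ.2.2 k i x]
  ring

include hδ hcconst hΔdef in
lemma delta_comm_dDe_word (i : Fin m) (θ : Theta (Fin t)) (x : U) :
    δ i (thetaApply dDe θ x) = thetaApply dDe θ (δ i x) := by
  have key : ∀ (N : ℕ) (θ : Theta (Fin t)), deg θ ≤ N →
      ∀ x, δ i (thetaApply dDe θ x) = thetaApply dDe θ (δ i x) := by
    intro N
    induction N with
    | zero =>
      intro θ hθ x
      have : θ = 0 := deg_eq_zero_iff.mp (Nat.le_zero.mp hθ)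
      subst this
      rw [thetaApply_zero, thetaApply_zero]
    | succ N ihN =>
      intro θ hθ x
      by_cases h0 : θ = 0
      · subst h0; rw [thetaApply_zero, thetaApply_zero]
      · obtain ⟨jj, θ', rfl, hdeg⟩ := exists_decomp h0
        have hcm := dDe_comm δ c dDe hδ hcconst hΔdef
        rw [thetaApply_add_single dDe hcm, thetaApply_add_single dDe hcm,
          delta_comm_dDe δ c dDe hδ hcconst hΔdef, ihN θ' (by omega)]
  exact key (deg θ) θ le_rfl x

end Rules

/-- membership of words in a stable subfield -/
lemma word_mem {t' : ℕ} (dA : Fin t' → U → U) (C : Subfield U)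
    (hst : ∀ j, ∀ y ∈ C, dA j y ∈ C)
    (hcomm : ∀ i j x, dA i (dA j x) = dA j (dA i x)) :
    ∀ (θ : Theta (Fin t')) (x : U), x ∈ C → thetaApply dA θ x ∈ C := by
  have key : ∀ (N : ℕ) (θ : Theta (Fin t')), deg θ ≤ N →
      ∀ x ∈ C, thetaApply dA θ x ∈ C := by
    intro N
    induction N with
    | zero =>
      intro θ hθ x hx
      have : θ = 0 := deg_eq_zero_iff.mp (Nat.le_zero.mp hθ)
      subst this
      rwa [thetaApply_zero]
    | succ N ihN =>
      intro θ hθ x hx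
      by_cases h0 : θ = 0
      · subst h0; rwa [thetaApply_zero]
      · obtain ⟨jj, θ', rfl, hdeg⟩ := exists_decomp h0
        rw [thetaApply_add_single dA hcomm]
        exact hst jj _ (ihN θ' (by omega) x hx)
  intro θ x hx
  exact key (deg θ) θ le_rfl x hx

/-- derivative of elements of a closure lands in a bigger closure, provided it does so
on generators -/
lemma closure_der_le (D : U → U) (hDa : ∀ x y, D (x + y) = D x + D y)
    (hDm : ∀ x y, D (x * y) = x * D y + D x * y)
    (X Y : Set U) (hXY : X ⊆ Y) (hgen : ∀ x ∈ X, D x ∈ Subfield.closure Y) :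
    ∀ x ∈ Subfield.closure X, D x ∈ Subfield.closure Y := by
  intro x hx
  have key : x ∈ Subfield.closure Y ∧ D x ∈ Subfield.closure Y := by
    induction hx using Subfield.closure_induction with
    | mem x hx => exact ⟨Subfield.subset_closure (hXY hx), hgen x hx⟩
    | one => exact ⟨Subfield.one_mem _, by rw [der_one D hDa hDm]; exact Subfield.zero_mem _⟩
    | add x y hx hy ihx ihy =>
      constructor
      · exact Subfield.add_mem _ ihx.1 ihy.1
      · rw [hDa]
        exact Subfield.add_mem _ ihx.2 ihy.2
    | neg x hx ihx =>
      exact ⟨Subfield.neg_mem _ ihx.1,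
        by rw [der_neg D hDa]; exact Subfield.neg_mem _ ihx.2⟩
    | inv x hx ihx =>
      refine ⟨Subfield.inv_mem _ ihx.1, ?_⟩
      by_cases h0 : x = 0
      · subst h0; rw [inv_zero, der_zero D hDa]; exact Subfield.zero_mem _
      · rw [der_inv D hDa hDm x h0]
        exact Subfield.mul_mem _ (Subfield.mul_mem _ (Subfield.neg_mem _ ihx.2)
          (Subfield.inv_mem _ ihx.1)) (Subfield.inv_mem _ ihx.1)
    | mul x y hx hy ihx ihy =>
      constructor
      · exact Subfield.mul_mem _ ihx.1 ihy.1
      · rw [hDm]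
        exact Subfield.add_mem _ (Subfield.mul_mem _ ihx.1 ihy.2)
          (Subfield.mul_mem _ ihx.2 ihy.1)
  exact key.2

end Families

section Sets

variable {U : Type} [Field U] {m n t : ℕ}

/-- all derivatives of the tuple `a` -/
def PDset (δ : Fin m → U → U) (a : Fin n → U) : Set U :=
  {x | ∃ (k : Fin n) (θ : Theta (Fin m)), x = thetaApply δ θ (a k)}

/-- derivatives of order at most `r` -/
def PDrset (δ : Fin m → U → U) (a : Fin n → U) (r : ℕ) : Set U :=
  {x | ∃ (k : Fin n) (θ : Theta (Fin m)), deg θ ≤ r ∧ x = thetaApply δ θ (a k)}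

/-- Δ-words applied to derivatives of order at most `r` -/
def SDset (δ : Fin m → U → U) (dDe : Fin t → U → U) (a : Fin n → U) (r : ℕ) : Set U :=
  {x | ∃ (k : Fin n) (θP : Theta (Fin m)) (θΔ : Theta (Fin t)),
    deg θP ≤ r ∧ x = thetaApply dDe θΔ (thetaApply δ θP (a k))}

lemma dAdjoin_eq (δ' : Fin m → U → U) (F : Subfield U) (a : Fin n → U) :
    dAdjoin δ' F a = Subfield.closure ((F : Set U) ∪ PDset δ' a) := rfl

lemma PDrset_mono (δ : Fin m → U → U) (a : Fin n → U) {r r' : ℕ} (h : r ≤ r') :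
    PDrset δ a r ⊆ PDrset δ a r' := by
  rintro x ⟨k, θ, hd, rfl⟩
  exact ⟨k, θ, le_trans hd h, rfl⟩

lemma SDset_mono (δ : Fin m → U → U) (dDe : Fin t → U → U) (a : Fin n → U) {r r' : ℕ}
    (h : r ≤ r') : SDset δ dDe a r ⊆ SDset δ dDe a r' := by
  rintro x ⟨k, θP, θΔ, hd, rfl⟩
  exact ⟨k, θP, θΔ, le_trans hd h, rfl⟩

lemma PDrset_subset_PDset (δ : Fin m → U → U) (a : Fin n → U) (r : ℕ) :
    PDrset δ a r ⊆ PDset δ a := by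
  rintro x ⟨k, θ, _, rfl⟩
  exact ⟨k, θ, rfl⟩

lemma PDrset_subset_SDset (δ : Fin m → U → U) (dDe : Fin t → U → U) (a : Fin n → U) (r : ℕ) :
    PDrset δ a r ⊆ SDset δ dDe a r := by
  rintro x ⟨k, θ, hd, rfl⟩
  exact ⟨k, θ, 0, hd, (thetaApply_zero dDe _).symm⟩

lemma PDrset_finite (δ : Fin m → U → U) (a : Fin n → U) (r : ℕ) :
    (PDrset δ a r).Finite := by
  classical
  have hθ : {θ : Theta (Fin m) | deg θ ≤ r}.Finite := by
    apply Set.Finite.subset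
      (Finset.Iic (Finsupp.equivFunOnFinite.symm fun _ : Fin m => r)).finite_toSet
    intro θ hθ
    simp only [Finset.coe_Iic, Set.mem_Iic]
    rw [Finsupp.le_def]
    intro j
    have h1 := deg_le_apply θ j
    have h2 : (Finsupp.equivFunOnFinite.symm fun _ : Fin m => r) j = r := rfl
    rw [h2]
    exact le_trans h1 hθ
  have himg : PDrset δ a r
      = (fun p : Fin n × Theta (Fin m) => thetaApply δ p.2 (a p.1)) ''
        (Set.univ ×ˢ {θ | deg θ ≤ r}) := by
    ext x
    constructor
    · rintro ⟨k, θ, hd, rfl⟩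
      exact ⟨(k, θ), ⟨trivial, hd⟩, rfl⟩
    · rintro ⟨⟨k, θ⟩, ⟨_, hd⟩, rfl⟩
      exact ⟨k, θ, hd, rfl⟩
  rw [himg]
  exact (Set.Finite.prod Set.finite_univ hθ).image _

lemma exists_enum (T : Set U) (h : T.Finite) :
    ∃ (s : ℕ) (α : Fin s → U), Set.range α = T := by
  classical
  refine ⟨h.toFinset.card, fun i => (h.toFinset.equivFin.symm i : U), ?_⟩
  ext u
  constructor
  · rintro ⟨i, rfl⟩
    have := (h.toFinset.equivFin.symm i).2
    rwa [← h.mem_toFinset]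
  · intro hu
    refine ⟨h.toFinset.equivFin ⟨u, h.mem_toFinset.mpr hu⟩, ?_⟩
    show ((h.toFinset.equivFin.symm (h.toFinset.equivFin ⟨u, h.mem_toFinset.mpr hu⟩)) : U) = u
    rw [Equiv.symm_apply_apply]

end Sets

end DCFAux

open DCFAux in
/-- Let `a` be a finite tuple in a (saturated model of `DCF_{0,m}`)
differential field `U` with commuting derivations `Π = {δ_1,…,δ_m}`, `K ≤ L`
differential subfields with `a` independent from `L` over `K` (i.e. `K⟨a⟩_Π` is
algebraically disjoint from `L` over `K`), and let `Δ` be a `K^Π`-linearly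
independent set of elements of the `K^Π`-span of `Π`.  Then `L⟨a⟩_Π` is finitely
`Δ`-generated over `L` if and only if `K⟨a⟩_Π` is finitely `Δ`-generated over `K`. -/
theorem bounding_type_independent_of_base
    {U : Type} [Field U] [CharZero U] {m n t : ℕ}
    (δ : Fin m → U → U) (hδ : IsCommDiff δ)
    (K L : Subfield U) (hKL : K ≤ L)
    (hKst : DStable δ K) (hLst : DStable δ L)
    (a : Fin n → U)
    -- Δ is given by derivations δΔ j = Σ_i c j i • δ_i with coefficients in K^Π:
    (c : Fin t → Fin m → U)
    (hc : ∀ j i, c j i ∈ K ∧ ∀ i', δ i' (c j i) = 0)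
    (dDe : Fin t → U → U)
    (hΔdef : ∀ j x, dDe j x = ∑ i, c j i * δ i x)
    -- Δ is linearly independent over K^Π:
    (hΔind : ∀ d : Fin t → U, (∀ j, d j ∈ K ∧ ∀ i', δ i' (d j) = 0) →
      (∀ x : U, ∑ j, d j * dDe j x = 0) → ∀ j, d j = 0)
    -- a ⫝_K L : K⟨a⟩_Π is algebraically disjoint from L over K:
    (hind : ∀ (d : ℕ) (x : Fin d → U), (∀ k, x k ∈ dAdjoin δ K a) →
      AlgebraicIndependent K x → AlgebraicIndependent L x) :
    FinitelyDGen δ dDe L a ↔ FinitelyDGen δ dDe K a := by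
  classical
  have hadd := hδ.1
  have hmul := hδ.2.1
  have hcom := hδ.2.2
  have hcconst : ∀ j i i', δ i' (c j i) = 0 := fun j i i' => (hc j i).2 i'
  have hcK : ∀ j i, c j i ∈ K := fun j i => (hc j i).1
  have hcL : ∀ j i, c j i ∈ L := fun j i => hKL ((hc j i).1)
  have hDadd : ∀ j (x y : U), dDe j (x + y) = dDe j x + dDe j y :=
    fun j => dDe_add δ c dDe hδ hΔdef j
  have hDmul : ∀ j (x y : U), dDe j (x * y) = x * dDe j y + dDe j x * y :=
    fun j => dDe_mul δ c dDe hδ hΔdef j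
  have hDcomm : ∀ j j' (x : U), dDe j (dDe j' x) = dDe j' (dDe j x) :=
    dDe_comm δ c dDe hδ hcconst hΔdef
  have hdcw : ∀ (i : Fin m) (θD : Theta (Fin t)) (x : U),
      δ i (thetaApply dDe θD x) = thetaApply dDe θD (δ i x) :=
    delta_comm_dDe_word δ c dDe hδ hcconst hΔdef
  -- basic stability of `F⟨a⟩_Π`
  have adjδ : ∀ (F : Subfield U), DStable δ F → ∀ (i : Fin m),
      ∀ x ∈ dAdjoin δ F a, δ i x ∈ dAdjoin δ F a := by
    intro F hFst i
    rw [dAdjoin_eq]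
    apply closure_stable (δ i) (hadd i) (hmul i)
    rintro y (hy | hy)
    · exact Subfield.subset_closure (Set.mem_union_left _ (hFst i y hy))
    · obtain ⟨k, θ, rfl⟩ := hy
      rw [← thetaApply_add_single δ hcom θ i (a k)]
      exact Subfield.subset_closure
        (Set.mem_union_right _ ⟨k, θ + Finsupp.single i 1, rfl⟩)
  have adjDe : ∀ (F : Subfield U), (∀ j i, c j i ∈ F) → DStable δ F → ∀ (j : Fin t),
      ∀ x ∈ dAdjoin δ F a, dDe j x ∈ dAdjoin δ F a := by
    intro F hcF hFst j x hx
    rw [hΔdef]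
    apply Subfield.sum_mem
    intro i _
    exact Subfield.mul_mem _
      (by rw [dAdjoin_eq]; exact Subfield.subset_closure (Set.mem_union_left _ (hcF j i)))
      (adjδ F hFst i x hx)
  have hKLadj : dAdjoin δ K a ≤ dAdjoin δ L a := by
    rw [dAdjoin_eq, dAdjoin_eq]
    exact Subfield.closure_mono (Set.union_subset_union_left _ fun u hu => hKL hu)
  constructor
  · -- HARD direction: from L to K
    rintro ⟨s, α, hmemL, heqL⟩
    -- Step a: find a uniform bound r₀ for the order of derivatives generating α
    have hex : ∀ x ∈ dAdjoin δ L a, ∃ r, x ∈ Subfield.closure ((L : Set U) ∪ PDrset δ a r) := by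
      intro x hx
      rw [dAdjoin_eq] at hx
      induction hx using Subfield.closure_induction with
      | mem x hx =>
        rcases hx with hx | hx
        · exact ⟨0, Subfield.subset_closure (Set.mem_union_left _ hx)⟩
        · obtain ⟨k, θ, rfl⟩ := hx
          exact ⟨deg θ, Subfield.subset_closure (Set.mem_union_right _ ⟨k, θ, le_rfl, rfl⟩)⟩
      | one => exact ⟨0, Subfield.one_mem _⟩
      | add x y hx hy ihx ihy =>
        obtain ⟨r₁, h₁⟩ := ihx
        obtain ⟨r₂, h₂⟩ := ihy
        refine ⟨max r₁ r₂, Subfield.add_mem _ ?_ ?_⟩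
        · exact Subfield.closure_mono (Set.union_subset_union_right _
            (PDrset_mono δ a (le_max_left r₁ r₂))) h₁
        · exact Subfield.closure_mono (Set.union_subset_union_right _
            (PDrset_mono δ a (le_max_right r₁ r₂))) h₂
      | neg x hx ihx =>
        obtain ⟨r₁, h₁⟩ := ihx
        exact ⟨r₁, Subfield.neg_mem _ h₁⟩
      | inv x hx ihx =>
        obtain ⟨r₁, h₁⟩ := ihx
        exact ⟨r₁, Subfield.inv_mem _ h₁⟩
      | mul x y hx hy ihx ihy =>
        obtain ⟨r₁, h₁⟩ := ihx
        obtain ⟨r₂, h₂⟩ := ihy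
        refine ⟨max r₁ r₂, Subfield.mul_mem _ ?_ ?_⟩
        · exact Subfield.closure_mono (Set.union_subset_union_right _
            (PDrset_mono δ a (le_max_left r₁ r₂))) h₁
        · exact Subfield.closure_mono (Set.union_subset_union_right _
            (PDrset_mono δ a (le_max_right r₁ r₂))) h₂
    have hrk : ∀ k : Fin s, ∃ r, α k ∈ Subfield.closure ((L : Set U) ∪ PDrset δ a r) :=
      fun k => hex (α k) (hmemL k)
    choose rk hrk' using hrk
    set r₀ : ℕ := (Finset.univ : Finset (Fin s)).sup rk with hr₀
    have hαr : ∀ k, α k ∈ Subfield.closure ((L : Set U) ∪ PDrset δ a r₀) := by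
      intro k
      exact Subfield.closure_mono (Set.union_subset_union_right _
        (PDrset_mono δ a (Finset.le_sup (Finset.mem_univ k)))) (hrk' k)
    -- the Δ-fields
    set Fr : ℕ → Subfield U := fun r => Subfield.closure ((K : Set U) ∪ SDset δ dDe a r)
      with hFr
    set N : Subfield U := Subfield.closure ((L : Set U) ∪ SDset δ dDe a r₀) with hN
    -- stability under dDe
    have hFr_dDe : ∀ r (j : Fin t), ∀ x ∈ Fr r, dDe j x ∈ Fr r := by
      intro r j
      apply closure_stable (dDe j) (hDadd j) (hDmul j)
      rintro y (hy | hy)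
      · refine Subfield.subset_closure (Set.mem_union_left _ ?_)
        rw [hΔdef]
        exact Subfield.sum_mem _ fun i _ => Subfield.mul_mem _ (hcK j i) (hKst i y hy)
      · obtain ⟨k, θP, θD, hdeg, rfl⟩ := hy
        rw [← thetaApply_add_single dDe hDcomm θD j _]
        exact Subfield.subset_closure
          (Set.mem_union_right _ ⟨k, θP, θD + Finsupp.single j 1, hdeg, rfl⟩)
    have hN_dDe : ∀ (j : Fin t), ∀ x ∈ N, dDe j x ∈ N := by
      intro j
      apply closure_stable (dDe j) (hDadd j) (hDmul j)
      rintro y (hy | hy)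
      · refine Subfield.subset_closure (Set.mem_union_left _ ?_)
        rw [hΔdef]
        exact Subfield.sum_mem _ fun i _ => Subfield.mul_mem _ (hcL j i) (hLst i y hy)
      · obtain ⟨k, θP, θD, hdeg, rfl⟩ := hy
        rw [← thetaApply_add_single dDe hDcomm θD j _]
        exact Subfield.subset_closure
          (Set.mem_union_right _ ⟨k, θP, θD + Finsupp.single j 1, hdeg, rfl⟩)
    -- Step b: L⟨a⟩_Π = N
    have hEQL : dAdjoin δ L a = N := by
      apply le_antisymm
      · rw [dAdjoin_eq, Subfield.closure_le]
        rintro u (hu | hu)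
        · exact Subfield.subset_closure (Set.mem_union_left _ hu)
        · obtain ⟨k, θ, rfl⟩ := hu
          have h1 : thetaApply δ θ (a k) ∈ dAdjoin δ L a := by
            rw [dAdjoin_eq]
            exact Subfield.subset_closure (Set.mem_union_right _ ⟨k, θ, rfl⟩)
          rw [heqL] at h1
          have h2 : dAdjoin dDe L α ≤ N := by
            rw [dAdjoin_eq, Subfield.closure_le]
            rintro u (hu | hu)
            · exact Subfield.subset_closure (Set.mem_union_left _ hu)
            · obtain ⟨k', θD, rfl⟩ := hu
              have hα : α k' ∈ N :=
                Subfield.closure_mono (Set.union_subset_union_right _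
                  (PDrset_subset_SDset δ dDe a r₀)) (hαr k')
              exact word_mem dDe N hN_dDe hDcomm θD _ hα
          exact h2 h1
      · rw [hN, Subfield.closure_le]
        rintro u (hu | hu)
        · rw [dAdjoin_eq]
          exact Subfield.subset_closure (Set.mem_union_left _ hu)
        · obtain ⟨k, θP, θD, hdeg, rfl⟩ := hu
          have hbase : thetaApply δ θP (a k) ∈ dAdjoin δ L a := by
            rw [dAdjoin_eq]
            exact Subfield.subset_closure (Set.mem_union_right _ ⟨k, θP, rfl⟩)
          exact word_mem dDe (dAdjoin δ L a) (adjDe L hcL hLst) hDcomm θD _ hbase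
    have hSD_sub_M : ∀ r, SDset δ dDe a r ⊆ ↑(dAdjoin δ K a) := by
      intro r x hx
      obtain ⟨k, θP, θD, hdeg, rfl⟩ := hx
      have hbase : thetaApply δ θP (a k) ∈ dAdjoin δ K a := by
        rw [dAdjoin_eq]
        exact Subfield.subset_closure (Set.mem_union_right _ ⟨k, θP, rfl⟩)
      exact word_mem dDe (dAdjoin δ K a) (adjDe K hcK hKst) hDcomm θD _ hbase
    -- Step c: every derivative of `a` is algebraic over `Fr r₀`
    have halg : ∀ x ∈ PDset δ a, AlgOver (Fr r₀) x := by
      intro x hxPD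
      have hxM : x ∈ dAdjoin δ K a := by
        rw [dAdjoin_eq]
        exact Subfield.subset_closure (Set.mem_union_right _ hxPD)
      have hxN : x ∈ N := by
        rw [← hEQL]
        exact hKLadj hxM
      obtain ⟨d, v, hv, hxv⟩ := mem_closure_finite (B := (L : Set U)) (S := SDset δ dDe a r₀) hxN
      have hvM : ∀ i', v i' ∈ (dAdjoin δ K a : Set U) := fun i' => hSD_sub_M r₀ (hv i')
      have hxAlgL : AlgOver (Subfield.closure ((L : Set U) ∪ Set.range v)) x :=
        algOver_of_mem hxv
      have hdes := algOver_descent K L hKL (dAdjoin δ K a : Set U)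
        (fun d' z hz hAI => hind d' z (fun k => hz k) hAI) d v hvM x hxM hxAlgL
      refine hdes.mono (Subfield.closure_mono (Set.union_subset_union_right _ ?_))
      rintro u ⟨i', rfl⟩
      exact hv i'
    -- Step d: δ i maps Fr r₀ into Fr (r₀+1)
    have hder_le : ∀ (i : Fin m), ∀ x ∈ Fr r₀, δ i x ∈ Fr (r₀ + 1) := by
      intro i
      apply closure_der_le (δ i) (hadd i) (hmul i)
      · exact Set.union_subset_union_right _ (SDset_mono δ dDe a (Nat.le_succ r₀))
      · rintro y (hy | hy)
        · exact Subfield.subset_closure (Set.mem_union_left _ (hKst i y hy))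
        · obtain ⟨k, θP, θD, hdeg, rfl⟩ := hy
          rw [hdcw i θD, ← thetaApply_add_single δ hcom θP i (a k)]
          refine Subfield.subset_closure (Set.mem_union_right _
            ⟨k, θP + Finsupp.single i 1, θD, ?_, rfl⟩)
          rw [deg_add, deg_single]
          omega
    have hFr_mono : Fr r₀ ≤ Fr (r₀ + 1) :=
      Subfield.closure_mono (Set.union_subset_union_right _ (SDset_mono δ dDe a (Nat.le_succ r₀)))
    -- Step e: the minimal polynomial argument
    have hkey : ∀ x ∈ PDrset δ a (r₀ + 1), ∀ i, δ i x ∈ Fr (r₀ + 1) := by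
      intro x hxPDr i
      have hxF : x ∈ Fr (r₀ + 1) :=
        Subfield.subset_closure (Set.mem_union_right _ (PDrset_subset_SDset δ dDe a _ hxPDr))
      have hxalg : AlgOver (Fr r₀) x := halg x (PDrset_subset_PDset δ a _ hxPDr)
      have hminex : ∃ nn : ℕ, ∃ p : Polynomial U,
          (p ≠ 0 ∧ (∀ kk, p.coeff kk ∈ Fr r₀) ∧ Polynomial.eval x p = 0)
            ∧ p.natDegree = nn := by
        obtain ⟨p, h1, h2, h3⟩ := hxalg
        exact ⟨p.natDegree, p, ⟨h1, h2, h3⟩, rfl⟩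
      set n₀ := Nat.find hminex with hn₀
      obtain ⟨p, ⟨hp0, hpc, hpe⟩, hpdeg⟩ := Nat.find_spec hminex
      have hn₀pos : 1 ≤ n₀ := by
        by_contra hcon
        push_neg at hcon
        have h0 : p.natDegree = 0 := by omega
        have hp' := Polynomial.eq_C_of_natDegree_eq_zero h0
        rw [hp'] at hpe
        rw [Polynomial.eval_C] at hpe
        rw [hp', hpe] at hp0
        exact hp0 (map_zero _)
      have hzero : (0 : U) = ∑ kk ∈ Finset.range (n₀ + 1), p.coeff kk * δ i (x ^ kk)
          + ∑ kk ∈ Finset.range (n₀ + 1), δ i (p.coeff kk) * x ^ kk := by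
        have h1 : (0 : U) = δ i (Polynomial.eval x p) := by
          rw [hpe, der_zero (δ i) (hadd i)]
        rw [Polynomial.eval_eq_sum_range, hpdeg] at h1
        rw [der_sum (δ i) (hadd i)] at h1
        rw [Finset.sum_congr rfl (fun kk _ => hmul i (p.coeff kk) (x ^ kk))] at h1
        rw [Finset.sum_add_distrib] at h1
        exact h1
      set B : U := ∑ kk ∈ Finset.range n₀, p.coeff (kk + 1) * (((kk : U) + 1) * x ^ kk)
        with hB
      have hfirst : ∑ kk ∈ Finset.range (n₀ + 1), p.coeff kk * δ i (x ^ kk) = B * δ i x := by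
        rw [Finset.sum_range_succ']
        have h0 : p.coeff 0 * δ i (x ^ 0) = 0 := by
          rw [pow_zero, der_one (δ i) (hadd i) (hmul i), mul_zero]
        rw [h0, add_zero, hB, Finset.sum_mul]
        apply Finset.sum_congr rfl
        intro kk _
        rw [der_pow_succ (δ i) (hadd i) (hmul i) x kk]
        ring
      set A : U := ∑ kk ∈ Finset.range (n₀ + 1), δ i (p.coeff kk) * x ^ kk with hA
      have hAF : A ∈ Fr (r₀ + 1) := by
        apply Subfield.sum_mem
        intro kk _
        exact Subfield.mul_mem _ (hder_le i _ (hpc kk)) (Subfield.pow_mem _ hxF kk)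
      have hBF : B ∈ Fr (r₀ + 1) := by
        apply Subfield.sum_mem
        intro kk _
        refine Subfield.mul_mem _ (hFr_mono (hpc (kk + 1))) (Subfield.mul_mem _ ?_
          (Subfield.pow_mem _ hxF kk))
        have : ((kk : U) + 1) = ((kk + 1 : ℕ) : U) := by push_cast; ring
        rw [this]
        exact natCast_mem _ _
      -- B ≠ 0 by minimality
      have hBne : B ≠ 0 := by
        intro hB0
        set q : Polynomial U := ∑ kk ∈ Finset.range n₀,
          Polynomial.C (p.coeff (kk + 1) * ((kk : U) + 1)) * Polynomial.X ^ kk with hq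
        have hqcoeff : ∀ jj, q.coeff jj
            = if jj ∈ Finset.range n₀ then p.coeff (jj + 1) * ((jj : U) + 1) else 0 := by
          intro jj
          rw [hq, Polynomial.finset_sum_coeff]
          rw [Finset.sum_congr rfl (fun kk _ => by
            rw [Polynomial.coeff_C_mul, Polynomial.coeff_X_pow])]
          simp only [mul_ite, mul_one, mul_zero]
          rw [Finset.sum_ite_eq (Finset.range n₀) jj _]
        have hqe : Polynomial.eval x q = B := by
          rw [hq, Polynomial.eval_finset_sum, hB]
          apply Finset.sum_congr rfl
          intro kk _
          rw [Polynomial.eval_mul, Polynomial.eval_C, Polynomial.eval_pow, Polynomial.eval_X]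
          ring
        have hq0 : q ≠ 0 := by
          intro hq0'
          have h1 := hqcoeff (n₀ - 1)
          rw [hq0'] at h1
          simp only [Polynomial.coeff_zero] at h1
          have h2 : (n₀ - 1) ∈ Finset.range n₀ := Finset.mem_range.mpr (by omega)
          rw [if_pos h2] at h1
          have h3 : n₀ - 1 + 1 = n₀ := by omega
          rw [h3] at h1
          have h4 : p.coeff n₀ ≠ 0 := by
            have h4' : p.coeff p.natDegree ≠ 0 := Polynomial.leadingCoeff_ne_zero.mpr hp0
            rw [hpdeg, ← hn₀] at h4'
            exact h4'
          have h5 : ((n₀ - 1 : ℕ) : U) + 1 ≠ 0 := by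
            have : ((n₀ - 1 : ℕ) : U) + 1 = ((n₀ - 1 + 1 : ℕ) : U) := by push_cast; ring
            rw [this, h3]
            exact Nat.cast_ne_zero.mpr (by omega)
          exact (mul_ne_zero h4 h5) h1.symm
        have hqc : ∀ kk, q.coeff kk ∈ Fr r₀ := by
          intro kk
          rw [hqcoeff kk]
          split_ifs
          · refine Subfield.mul_mem _ (hpc (kk + 1)) ?_
            have : ((kk : U) + 1) = ((kk + 1 : ℕ) : U) := by push_cast; ring
            rw [this]
            exact natCast_mem _ _
          · exact Subfield.zero_mem _
        have hqdeg : q.natDegree < n₀ := by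
          rw [Polynomial.natDegree_lt_iff_degree_lt hq0]
          rw [Polynomial.degree_lt_iff_coeff_zero]
          intro mm hmm
          rw [hqcoeff mm, if_neg (by simp; omega)]
        have hcontra := Nat.find_min hminex (m := q.natDegree)
          (by rw [← hn₀]; exact hqdeg)
        exact hcontra ⟨q, ⟨hq0, hqc, by rw [hqe, hB0]⟩, rfl⟩
      -- conclude
      have hδx : δ i x = -A / B := by
        rw [hfirst] at hzero
        field_simp
        linear_combination -hzero
      rw [hδx]
      exact Subfield.div_mem _ (Subfield.neg_mem _ hAF) hBF
    -- Step f: Fr (r₀+1) is δ-stable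
    have hFstab : ∀ (i : Fin m), ∀ x ∈ Fr (r₀ + 1), δ i x ∈ Fr (r₀ + 1) := by
      intro i
      apply closure_stable (δ i) (hadd i) (hmul i)
      rintro y (hy | hy)
      · exact Subfield.subset_closure (Set.mem_union_left _ (hKst i y hy))
      · obtain ⟨k, θP, θD, hdeg, rfl⟩ := hy
        rw [hdcw i θD]
        apply word_mem dDe (Fr (r₀ + 1)) (hFr_dDe (r₀ + 1)) hDcomm θD
        exact hkey _ ⟨k, θP, hdeg, rfl⟩ i
    -- Step g: K⟨a⟩_Π ≤ Fr (r₀+1)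
    have hM_le : dAdjoin δ K a ≤ Fr (r₀ + 1) := by
      rw [dAdjoin_eq, Subfield.closure_le]
      rintro u (hu | hu)
      · exact Subfield.subset_closure (Set.mem_union_left _ hu)
      · obtain ⟨k, θ, rfl⟩ := hu
        have hgen : ∀ (N' : ℕ) (θ' : Theta (Fin m)) (k' : Fin n), deg θ' ≤ N' →
            thetaApply δ θ' (a k') ∈ Fr (r₀ + 1) := by
          intro N'
          induction N' with
          | zero =>
            intro θ' k' h
            exact Subfield.subset_closure (Set.mem_union_right _
              ⟨k', θ', 0, by omega, (thetaApply_zero dDe _).symm⟩)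
          | succ N' ihN =>
            intro θ' k' h
            by_cases hle : deg θ' ≤ r₀ + 1
            · exact Subfield.subset_closure (Set.mem_union_right _
                ⟨k', θ', 0, hle, (thetaApply_zero dDe _).symm⟩)
            · have h0 : θ' ≠ 0 := by
                intro h0'
                rw [h0', deg_zero] at hle
                omega
              obtain ⟨ii, θ'', rfl, hdeg⟩ := exists_decomp h0
              rw [thetaApply_add_single δ hcom]
              exact hFstab ii _ (ihN θ'' k' (by omega))
        exact hgen (deg θ) θ k le_rfl
    -- Step h: Fr (r₀+1) ≤ K⟨a⟩_Π
    have hF_le : Fr (r₀ + 1) ≤ dAdjoin δ K a := by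
      rw [hFr, Subfield.closure_le]
      rintro u (hu | hu)
      · rw [dAdjoin_eq]
        exact Subfield.subset_closure (Set.mem_union_left _ hu)
      · exact hSD_sub_M (r₀ + 1) hu
    -- Step i: produce the witness
    obtain ⟨s', α', hrange⟩ := exists_enum (PDrset δ a (r₀ + 1)) (PDrset_finite δ a (r₀ + 1))
    refine ⟨s', α', ?_, ?_⟩
    · intro k'
      have : α' k' ∈ PDrset δ a (r₀ + 1) := by
        rw [← hrange]; exact ⟨k', rfl⟩
      rw [dAdjoin_eq]
      exact Subfield.subset_closure (Set.mem_union_right _ (PDrset_subset_PDset δ a _ this))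
    · have hGen : PDset dDe α' = SDset δ dDe a (r₀ + 1) := by
        ext u
        constructor
        · rintro ⟨k', θD, rfl⟩
          have : α' k' ∈ PDrset δ a (r₀ + 1) := by
            rw [← hrange]; exact ⟨k', rfl⟩
          obtain ⟨k, θP, hdeg, he⟩ := this
          exact ⟨k, θP, θD, hdeg, by rw [he]⟩
        · rintro ⟨k, θP, θD, hdeg, rfl⟩
          have : thetaApply δ θP (a k) ∈ Set.range α' := by
            rw [hrange]; exact ⟨k, θP, hdeg, rfl⟩
          obtain ⟨k', hk'⟩ := this
          exact ⟨k', θD, by rw [hk']⟩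
      have hα'eq : dAdjoin dDe K α' = Fr (r₀ + 1) := by
        rw [dAdjoin_eq, hGen, hFr]
      rw [hα'eq]
      exact le_antisymm hM_le hF_le
  · -- EASY direction: from K to L
    rintro ⟨s, α, hmem, heq⟩
    refine ⟨s, α, fun k => hKLadj (hmem k), le_antisymm ?_ ?_⟩
    · rw [dAdjoin_eq, Subfield.closure_le]
      rintro u (hu | hu)
      · rw [dAdjoin_eq]
        exact Subfield.subset_closure (Set.mem_union_left _ hu)
      · obtain ⟨k, θ, rfl⟩ := hu
        have h1 : thetaApply δ θ (a k) ∈ dAdjoin δ K a := by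
          rw [dAdjoin_eq]
          exact Subfield.subset_closure (Set.mem_union_right _ ⟨k, θ, rfl⟩)
        rw [heq] at h1
        have h2 : dAdjoin dDe K α ≤ dAdjoin dDe L α := by
          rw [dAdjoin_eq, dAdjoin_eq]
          exact Subfield.closure_mono (Set.union_subset_union_left _ fun u hu => hKL hu)
        exact h2 h1
    · rw [dAdjoin_eq (dDe) L α, Subfield.closure_le]
      rintro u (hu | hu)
      · rw [dAdjoin_eq]
        exact Subfield.subset_closure (Set.mem_union_left _ hu)
      · obtain ⟨k, θD, rfl⟩ := hu
        have hαk : α k ∈ dAdjoin δ L a := hKLadj (hmem k)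
        exact word_mem dDe (dAdjoin δ L a) (adjDe L hcL hLst) hDcomm θD _ hαk
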